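/- The matrices X1s and X1n give the Chevalley–Jordan decomposition of X1: X1 = X1s + X1n, X1s·X1n = X1n·X1s, X1n is a nilpotent matrix, and X1s is semisimple; in fact X1s satisfies X1s² = 2·X1s, so it is diagonalizable. -/

import Mathlib

set_option maxHeartbeats 1000000


open Matrix

noncomputable section

def X1 (α β : ℂ) : Matrix (Fin 4) (Fin 4) ℂ :=
  !![1,1,0,1; 1,1,0,0; α,β,0,0; 0,0,0,0]

def X2 (α β : ℂ) : Matrix (Fin 4) (Fin 4) ℂ :=
  !![1,1,0,0; 1,1,0,1; β-1,α+1,0,0; 0,0,0,0]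

def X3 : Matrix (Fin 4) (Fin 4) ℂ :=
  !![0,0,0,0; 0,0,0,0; 0,0,0,1; 0,0,0,0]

/-- The ℂ-linear span of {X1, X2, X3}. -/
def h (α β : ℂ) : Submodule ℂ (Matrix (Fin 4) (Fin 4) ℂ) :=
  Submodule.span ℂ {X1 α β, X2 α β, X3}
/-- A matrix is diagonalizable if it is conjugate to a diagonal matrix. -/
def IsDiagonalizable {n : ℕ} (A : Matrix (Fin n) (Fin n) ℂ) : Prop :=
  ∃ P : Matrix (Fin n) (Fin n) ℂ, IsUnit P ∧ (P⁻¹ * A * P).IsDiag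

def X1s (α β : ℂ) : Matrix (Fin 4) (Fin 4) ℂ :=
  !![1,1,0,1/2; 1,1,0,1/2; (α+β)/2,(α+β)/2,0,(α+β)/4; 0,0,0,0]

def X1n (α β : ℂ) : Matrix (Fin 4) (Fin 4) ℂ :=
  !![0,0,0,1/2; 0,0,0,-1/2; (α-β)/2,-(α-β)/2,0,-(α+β)/4; 0,0,0,0]

/-- X1s and X1n give the Chevalley–Jordan decomposition of X1. -/
theorem jordan_decomposition_X1 (α β : ℂ) (hαβ : α + β ≠ 0) :
    X1 α β = X1s α β + X1n α β ∧
    X1s α β * X1n α β = X1n α β * X1s α β ∧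
    IsNilpotent (X1n α β) ∧
    X1s α β * X1s α β = (2 : ℂ) • X1s α β ∧
    IsDiagonalizable (X1s α β) := by
  have hsq : X1n α β * X1n α β = !![0,0,0,0; 0,0,0,0; 0,0,0,(α-β)/2; 0,0,0,0] := by
    ext i j
    fin_cases i <;> fin_cases j <;>
      simp [X1n, Matrix.mul_apply, Fin.sum_univ_four, Matrix.vecHead, Matrix.vecTail] <;> ring
  refine ⟨?_, ?_, ⟨3, ?_⟩, ?_, ?_⟩
  · ext i j
    fin_cases i <;> fin_cases j <;>
      simp [X1, X1s, X1n, Matrix.add_apply, Matrix.vecHead, Matrix.vecTail] <;> ring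
  · ext i j
    fin_cases i <;> fin_cases j <;>
      simp [X1s, X1n, Matrix.mul_apply, Fin.sum_univ_four, Matrix.vecHead, Matrix.vecTail] <;> ring
  · rw [pow_succ, pow_two, hsq]
    ext i j
    fin_cases i <;> fin_cases j <;>
      simp [X1n, Matrix.mul_apply, Fin.sum_univ_four, Matrix.vecHead, Matrix.vecTail] <;> ring
  · ext i j
    fin_cases i <;> fin_cases j <;>
      simp [X1s, Matrix.mul_apply, Fin.sum_univ_four, Matrix.smul_apply, Matrix.vecHead, Matrix.vecTail] <;> ring
  · refine ⟨!![1,1,0,1; 1,-1,0,0; (α+β)/2,0,1,0; 0,0,0,-2], ?_, ?_⟩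
    · rw [Matrix.isUnit_iff_isUnit_det]
      rw [isUnit_iff_ne_zero, Matrix.det_succ_row_zero]
      simp [Fin.sum_univ_succ, Matrix.det_fin_three, Fin.succAbove]
    · have hP : IsUnit (!![1,1,0,1; 1,-1,0,0; (α+β)/2,0,1,0; 0,0,0,-2] : Matrix (Fin 4) (Fin 4) ℂ).det := by
        rw [isUnit_iff_ne_zero, Matrix.det_succ_row_zero]
        simp [Fin.sum_univ_succ, Matrix.det_fin_three, Fin.succAbove]
      have key : X1s α β * !![1,1,0,1; 1,-1,0,0; (α+β)/2,0,1,0; 0,0,0,-2] =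
          !![1,1,0,1; 1,-1,0,0; (α+β)/2,0,1,0; 0,0,0,-2] *
            !![(2:ℂ),0,0,0; 0,0,0,0; 0,0,0,0; 0,0,0,0] := by
        ext i j
        fin_cases i <;> fin_cases j <;>
          simp [X1s, Matrix.mul_apply, Fin.sum_univ_four, Matrix.vecHead, Matrix.vecTail] <;> ring
      rw [mul_assoc, key, ← mul_assoc, Matrix.nonsing_inv_mul _ hP, one_mul]
      intro i j hij
      fin_cases i <;> fin_cases j <;>
        simp_all [Matrix.vecHead, Matrix.vecTail]
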